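/- Let G be a group and suppose some constant δ ∈ (0,1) witnesses the strong Erdős–Hajnal property for triple products in G. Then there is a constant c₀ > 0 such that, for any α ∈ (0,1), there is some ε ∈ (0,1) with the following property: every finite subset Y ⊆ G of size at least 8/α contains subsets U, V, W ⊆ Y, all of size at least ε·|Y|^(c₀+1)/|Y³|^(c₀), such that |U·V·W| ≤ α·|Y|. -/

import Mathlib

open Finset Pointwise

/-- A finite subset `A` of a group is product-free if `x * y ∉ A` for all `x, y ∈ A`. -/
def ProductFree {G : Type*} [Group G] (A : Finset G) : Prop :=
  ∀ x ∈ A, ∀ y ∈ A, x * y ∉ A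

/-- `δ` witnesses the strong Erdős–Hajnal property for the triple-product relation
`x₁x₂x₃ = y₁y₂y₃` in the group `G`. -/
def TripleSEH (G : Type*) [Group G] (δ : ℝ) : Prop :=
  ∀ U₁ U₂ U₃ V₁ V₂ V₃ : Finset G,
    ∃ U₁' ⊆ U₁, ∃ U₂' ⊆ U₂, ∃ U₃' ⊆ U₃, ∃ V₁' ⊆ V₁, ∃ V₂' ⊆ V₂, ∃ V₃' ⊆ V₃,
      δ * U₁.card ≤ U₁'.card ∧ δ * U₂.card ≤ U₂'.card ∧ δ * U₃.card ≤ U₃'.card ∧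
      δ * V₁.card ≤ V₁'.card ∧ δ * V₂.card ≤ V₂'.card ∧ δ * V₃.card ≤ V₃'.card ∧
      ((∀ u₁ ∈ U₁', ∀ u₂ ∈ U₂', ∀ u₃ ∈ U₃', ∀ v₁ ∈ V₁', ∀ v₂ ∈ V₂', ∀ v₃ ∈ V₃',
          u₁ * u₂ * u₃ = v₁ * v₂ * v₃) ∨
       (∀ u₁ ∈ U₁', ∀ u₂ ∈ U₂', ∀ u₃ ∈ U₃', ∀ v₁ ∈ V₁', ∀ v₂ ∈ V₂', ∀ v₃ ∈ V₃',
          u₁ * u₂ * u₃ ≠ v₁ * v₂ * v₃))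

lemma seh_key {G : Type*} [Group G] [DecidableEq G] (δ : ℝ) (hδ0 : 0 < δ) (hδ1 : δ < 1)
    (hSEH : TripleSEH G δ) (Y : Finset G) (hY : Y.Nonempty) (k : ℕ) :
    ∃ A ⊆ Y, ∃ B ⊆ Y, ∃ C ⊆ Y,
      δ ^ k * Y.card ≤ (A.card : ℝ) ∧ δ ^ k * Y.card ≤ (B.card : ℝ) ∧
      δ ^ k * Y.card ≤ (C.card : ℝ) ∧
      (((A * B * C).card : ℝ) ≤ 1 ∨
        ((A * B * C).card : ℝ) ≤ ((Y ^ 3 : Finset G).card : ℝ) / 2 ^ k) := by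
  have hYpos : (0 : ℝ) < Y.card := by exact_mod_cast Finset.card_pos.mpr hY
  induction k with
  | zero =>
    refine ⟨Y, subset_rfl, Y, subset_rfl, Y, subset_rfl, by simp, by simp, by simp, Or.inr ?_⟩
    have h3 : (Y : Finset G) ^ 3 = Y * Y * Y := by rw [pow_succ, sq]
    simp [h3]
  | succ k ih =>
    obtain ⟨A, hA, B, hB, C, hC, hcA, hcB, hcC, hprod⟩ := ih
    have hdpow : (0 : ℝ) < δ ^ k := pow_pos hδ0 k
    have hstep : δ ^ (k + 1) * Y.card ≤ δ ^ k * Y.card := by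
      exact mul_le_mul_of_nonneg_right
        (pow_le_pow_of_le_one hδ0.le hδ1.le (Nat.le_succ k)) hYpos.le
    have hApos : (0 : ℝ) < A.card := lt_of_lt_of_le (by positivity) hcA
    have hBpos : (0 : ℝ) < B.card := lt_of_lt_of_le (by positivity) hcB
    have hCpos : (0 : ℝ) < C.card := lt_of_lt_of_le (by positivity) hcC
    rcases hprod with h1 | hM
    · exact ⟨A, hA, B, hB, C, hC, hstep.trans hcA, hstep.trans hcB, hstep.trans hcC, Or.inl h1⟩
    · obtain ⟨U1, hU1, U2, hU2, U3, hU3, V1, hV1, V2, hV2, V3, hV3,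
        hb1, hb2, hb3, hb4, hb5, hb6, hcase⟩ := hSEH A B C A B C
      have hsz : ∀ {S : Finset G} {T : Finset G}, (0 : ℝ) < T.card →
          δ ^ k * Y.card ≤ (T.card : ℝ) → δ * T.card ≤ (S.card : ℝ) →
          δ ^ (k + 1) * Y.card ≤ (S.card : ℝ) := by
        intro S T hT h1 h2
        calc δ ^ (k + 1) * Y.card = δ * (δ ^ k * Y.card) := by ring
          _ ≤ δ * T.card := by nlinarith
          _ ≤ (S.card : ℝ) := h2
      have hU1s := hsz hApos hcA hb1
      have hU2s := hsz hBpos hcB hb2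
      have hU3s := hsz hCpos hcC hb3
      have hV1s := hsz hApos hcA hb4
      have hV2s := hsz hBpos hcB hb5
      have hV3s := hsz hCpos hcC hb6
      have hne : ∀ {S : Finset G}, δ ^ (k + 1) * Y.card ≤ (S.card : ℝ) → S.Nonempty := by
        intro S h
        have : (0 : ℝ) < S.card := lt_of_lt_of_le (by positivity) h
        exact Finset.card_pos.mp (by exact_mod_cast this)
      rcases hcase with heq | hneq
      · obtain ⟨v1, hv1⟩ := hne hV1s
        obtain ⟨v2, hv2⟩ := hne hV2s
        obtain ⟨v3, hv3⟩ := hne hV3s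
        refine ⟨U1, hU1.trans hA, U2, hU2.trans hB, U3, hU3.trans hC, hU1s, hU2s, hU3s,
          Or.inl ?_⟩
        have hone : (U1 * U2 * U3).card ≤ 1 := by
          apply Finset.card_le_one.mpr
          intro a ha b hb
          obtain ⟨p, hp, u3, hu3, rfl⟩ := Finset.mem_mul.mp ha
          obtain ⟨u1, hu1, u2, hu2, rfl⟩ := Finset.mem_mul.mp hp
          obtain ⟨q, hq, w3, hw3, rfl⟩ := Finset.mem_mul.mp hb
          obtain ⟨w1, hw1, w2, hw2, rfl⟩ := Finset.mem_mul.mp hq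
          rw [heq u1 hu1 u2 hu2 u3 hu3 v1 hv1 v2 hv2 v3 hv3,
            heq w1 hw1 w2 hw2 w3 hw3 v1 hv1 v2 hv2 v3 hv3]
        exact_mod_cast hone
      · set P := U1 * U2 * U3 with hP
        set Q := V1 * V2 * V3 with hQ
        have hPsub : P ⊆ A * B * C := mul_subset_mul (mul_subset_mul hU1 hU2) hU3
        have hQsub : Q ⊆ A * B * C := mul_subset_mul (mul_subset_mul hV1 hV2) hV3
        have hdisj : Disjoint P Q := by
          rw [Finset.disjoint_left]
          intro a haP haQ
          obtain ⟨p, hp, u3, hu3, ha3⟩ := Finset.mem_mul.mp haP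
          obtain ⟨u1, hu1, u2, hu2, ha2⟩ := Finset.mem_mul.mp hp
          obtain ⟨q, hq, w3, hw3, hb3⟩ := Finset.mem_mul.mp haQ
          obtain ⟨w1, hw1, w2, hw2, hb2⟩ := Finset.mem_mul.mp hq
          exact hneq u1 hu1 u2 hu2 u3 hu3 w1 hw1 w2 hw2 w3 hw3
            (by rw [ha2, ha3, hb2, hb3])
        have hsum : (P.card : ℝ) + Q.card ≤ ((A * B * C).card : ℝ) := by
          have h1 : (P ∪ Q).card = P.card + Q.card := Finset.card_union_of_disjoint hdisj
          have h2 : (P ∪ Q).card ≤ (A * B * C).card :=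
            Finset.card_le_card (Finset.union_subset hPsub hQsub)
          exact_mod_cast h1 ▸ h2
        have hhalf : ((Y ^ 3 : Finset G).card : ℝ) / 2 ^ (k + 1)
            = ((Y ^ 3 : Finset G).card : ℝ) / 2 ^ k / 2 := by ring
        by_cases hPQ : (P.card : ℝ) ≤ Q.card
        · refine ⟨U1, hU1.trans hA, U2, hU2.trans hB, U3, hU3.trans hC, hU1s, hU2s, hU3s,
            Or.inr ?_⟩
          rw [hhalf]; linarith
        · refine ⟨V1, hV1.trans hA, V2, hV2.trans hB, V3, hV3.trans hC, hV1s, hV2s, hV3s,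
            Or.inr ?_⟩
          rw [hhalf]; linarith

set_option maxHeartbeats 1000000 in
theorem stmt2 {G : Type*} [Group G] [DecidableEq G] (δ : ℝ) (hδ : δ ∈ Set.Ioo (0 : ℝ) 1)
    (hSEH : TripleSEH G δ) :
    ∃ c₀ : ℝ, 0 < c₀ ∧
      ∀ α ∈ Set.Ioo (0 : ℝ) 1, ∃ ε ∈ Set.Ioo (0 : ℝ) 1,
        ∀ Y : Finset G, 8 / α ≤ (Y.card : ℝ) →
          ∃ U ⊆ Y, ∃ V ⊆ Y, ∃ W ⊆ Y,
            ε * (Y.card : ℝ) ^ (c₀ + 1) / ((Y ^ 3 : Finset G).card : ℝ) ^ c₀ ≤ U.card ∧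
            ε * (Y.card : ℝ) ^ (c₀ + 1) / ((Y ^ 3 : Finset G).card : ℝ) ^ c₀ ≤ V.card ∧
            ε * (Y.card : ℝ) ^ (c₀ + 1) / ((Y ^ 3 : Finset G).card : ℝ) ^ c₀ ≤ W.card ∧
            ((U * V * W).card : ℝ) ≤ α * Y.card := by
  obtain ⟨hδ0, hδ1⟩ := hδ
  set c₀ := Real.logb 2 δ⁻¹ with hc₀def
  have hc₀pos : 0 < c₀ := Real.logb_pos one_lt_two ((one_lt_inv₀ hδ0).mpr hδ1)
  have hδeq : δ = (2 : ℝ) ^ (-c₀) := by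
    rw [hc₀def, Real.logb_inv, neg_neg, Real.rpow_logb two_pos (by norm_num) hδ0]
  refine ⟨c₀, hc₀pos, ?_⟩
  rintro α ⟨hα0, hα1⟩
  have hαc1 : α ^ c₀ < 1 := Real.rpow_lt_one hα0.le hα1 hc₀pos
  have hαcpos : 0 < α ^ c₀ := Real.rpow_pos_of_pos hα0 c₀
  refine ⟨δ * α ^ c₀, ⟨by positivity, by nlinarith⟩, ?_⟩
  intro Y hYcard
  have hYpos : (0 : ℝ) < Y.card := lt_of_lt_of_le (by positivity) hYcard
  have hYne : Y.Nonempty := Finset.card_pos.mp (by exact_mod_cast hYpos)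
  have h8 : (8 : ℝ) ≤ α * Y.card := by
    rw [div_le_iff₀ hα0] at hYcard; linarith [mul_comm α (Y.card : ℝ)]
  set N := ((Y ^ 3 : Finset G).card : ℝ) with hNdef
  have hNY : (Y.card : ℝ) ≤ N := by
    have h3 : (Y : Finset G) ^ 3 = Y * Y * Y := by rw [pow_succ, sq]
    have : Y.card ≤ (Y * Y * Y).card :=
      Finset.card_le_card_mul_left (hYne.mul hYne)
    rw [hNdef, h3]; exact_mod_cast this
  have hNpos : (0 : ℝ) < N := lt_of_lt_of_le hYpos hNY
  set x := N / (α * Y.card) with hxdef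
  have hxpos : 0 < x := div_pos hNpos (mul_pos hα0 hYpos)
  have hx1 : 1 ≤ x := by
    rw [hxdef, le_div_iff₀ (mul_pos hα0 hYpos), one_mul]
    nlinarith
  set L := Real.logb 2 x with hLdef
  have hL0 : 0 ≤ L := Real.logb_nonneg one_lt_two hx1
  set k := ⌈L⌉₊ with hkdef
  obtain ⟨A, hA, B, hB, C, hC, hcA, hcB, hcC, hprod⟩ :=
    seh_key δ hδ0 hδ1 hSEH Y hYne k
  -- size bound
  have hxL : x = (2 : ℝ) ^ L := (Real.rpow_logb two_pos (by norm_num) hxpos).symm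
  have hδk : δ ^ k = (2 : ℝ) ^ (-(c₀ * k)) := by
    rw [hδeq, ← Real.rpow_natCast ((2 : ℝ) ^ (-c₀)) k, ← Real.rpow_mul (by norm_num), neg_mul]
  have hrhs : δ * α ^ c₀ * (Y.card : ℝ) ^ (c₀ + 1) / N ^ c₀
      = (2 : ℝ) ^ (-(c₀ * (1 + L))) * Y.card := by
    have e1 : (2 : ℝ) ^ (-(c₀ * (1 + L))) = 2 ^ (-c₀) * ((2:ℝ) ^ L) ^ (-c₀) := by
      rw [← Real.rpow_mul (by norm_num : (0:ℝ) ≤ 2), ← Real.rpow_add two_pos]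
      congr 1
      ring
    have e2 : ((2:ℝ) ^ L) ^ (-c₀) = α ^ c₀ * (Y.card : ℝ) ^ c₀ / N ^ c₀ := by
      rw [← hxL]
      have hxinv : x⁻¹ = α * Y.card / N := by rw [hxdef, inv_div]
      rw [Real.rpow_neg hxpos.le, ← Real.inv_rpow hxpos.le, hxinv,
        Real.div_rpow (mul_pos hα0 hYpos).le hNpos.le, Real.mul_rpow hα0.le hYpos.le]
    rw [e1, e2, ← hδeq, Real.rpow_add hYpos, Real.rpow_one]
    ring
  have hsize : δ * α ^ c₀ * (Y.card : ℝ) ^ (c₀ + 1) / N ^ c₀ ≤ δ ^ k * Y.card := by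
    rw [hrhs, hδk]
    have hk1 : (k : ℝ) ≤ 1 + L := by
      have := Nat.ceil_lt_add_one hL0
      rw [hkdef]; push_cast; linarith
    have : (2 : ℝ) ^ (-(c₀ * (1 + L))) ≤ (2 : ℝ) ^ (-(c₀ * k)) := by
      apply (Real.rpow_le_rpow_left_iff one_lt_two).mpr
      nlinarith
    nlinarith [Real.rpow_pos_of_pos two_pos (-(c₀ * (1 + L)))]
  -- product bound
  have hprodbound : ((A * B * C).card : ℝ) ≤ α * Y.card := by
    rcases hprod with h1 | h2
    · linarith
    · have hx2k : x ≤ (2 : ℝ) ^ k := by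
        rw [hxL, ← Real.rpow_natCast 2 k]
        exact (Real.rpow_le_rpow_left_iff one_lt_two).mpr (Nat.le_ceil L)
      have hNx : N / (2 : ℝ) ^ k ≤ N / x :=
        div_le_div_of_nonneg_left hNpos.le hxpos hx2k
      have hNxval : N / x = α * Y.card := by
        rw [hxdef, div_div_eq_mul_div, mul_comm, mul_div_assoc, div_self hNpos.ne', mul_one]
      linarith
  exact ⟨A, hA, B, hB, C, hC, hsize.trans hcA, hsize.trans hcB, hsize.trans hcC, hprodbound⟩
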